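/- arXiv:1305.3912 — 11 statements merged into one kernel-verified Lean document; each statement's English description precedes it below -/
import Mathlib

section
/- The set {S(X') : X' ∈ E, X' ≺ X} is nonempty and bounded above, the set {S(X'') : X'' ∈ E, X ≺ X''} is nonempty and bounded below, and S₋(X) ≤ S₊(X) for every X ∈ Ω. (Proposition 1 (a) and second half of (b).) -/
/-- The set of entropies of equilibrium states from which `X` is adiabatically accessible. -/
def lowerSet {Ω : Type*} (prec : Ω → Ω → Prop) (E : Set Ω) (S : Ω → ℝ) (X : Ω) : Set ℝ :=
  {s | ∃ Z ∈ E, prec Z X ∧ S Z = s}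

/-- The set of entropies of equilibrium states adiabatically accessible from `X`. -/
def upperSet {Ω : Type*} (prec : Ω → Ω → Prop) (E : Set Ω) (S : Ω → ℝ) (X : Ω) : Set ℝ :=
  {s | ∃ Z ∈ E, prec X Z ∧ S Z = s}

/-- The lower non-equilibrium entropy S₋. -/
noncomputable def Sminus {Ω : Type*} (prec : Ω → Ω → Prop) (E : Set Ω) (S : Ω → ℝ) (X : Ω) : ℝ :=
  sSup (lowerSet prec E S X)

/-- The upper non-equilibrium entropy S₊. -/
noncomputable def Splus {Ω : Type*} (prec : Ω → Ω → Prop) (E : Set Ω) (S : Ω → ℝ) (X : Ω) : ℝ :=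
  sInf (upperSet prec E S X)

/-- Proposition 1 (a) and second half of (b). -/
theorem stmt_0 {Ω : Type*} (prec : Ω → Ω → Prop) (E : Set Ω) (S : Ω → ℝ)
    (TRANS : ∀ x y z : Ω, prec x y → prec y z → prec x z)
    (MONO : ∀ x ∈ E, ∀ y ∈ E, prec x y → S x ≤ S y)
    (N2 : ∀ X : Ω, ∃ X' ∈ E, ∃ X'' ∈ E, prec X' X ∧ prec X X'') :
    ∀ X : Ω,
      (lowerSet prec E S X).Nonempty ∧ BddAbove (lowerSet prec E S X) ∧
      (upperSet prec E S X).Nonempty ∧ BddBelow (upperSet prec E S X) ∧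
      Sminus prec E S X ≤ Splus prec E S X := by
  intro X
  obtain ⟨X', hX', X'', hX'', hp1, hp2⟩ := N2 X
  have hne1 : (lowerSet prec E S X).Nonempty := ⟨S X', X', hX', hp1, rfl⟩
  have hne2 : (upperSet prec E S X).Nonempty := ⟨S X'', X'', hX'', hp2, rfl⟩
  have key : ∀ a ∈ lowerSet prec E S X, ∀ b ∈ upperSet prec E S X, a ≤ b := by
    rintro a ⟨Z, hZ, hZX, rfl⟩ b ⟨W, hW, hXW, rfl⟩
    exact MONO Z hZ W hW (TRANS _ _ _ hZX hXW)
  have hba : BddAbove (lowerSet prec E S X) :=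
    ⟨S X'', fun a ha => key a ha _ ⟨X'', hX'', hp2, rfl⟩⟩
  have hbb : BddBelow (upperSet prec E S X) :=
    ⟨S X', fun b hb => key _ ⟨X', hX', hp1, rfl⟩ b hb⟩
  refine ⟨hne1, hba, hne2, hbb, ?_⟩
  exact csSup_le hne1 fun a ha => le_csInf hne2 fun b hb => key a ha b hb
end

section
/- If X ≺ Y then S₋(X) ≤ S₋(Y) and S₊(X) ≤ S₊(Y); that is, both S₋ and S₊ are monotone with respect to adiabatic accessibility. (Proposition 1 (d).) -/
/-- Proposition 1 (d): S₋ and S₊ are monotone with respect to ≺. -/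
theorem stmt_2 {Ω : Type*} (prec : Ω → Ω → Prop) (E : Set Ω) (S : Ω → ℝ)
    (TRANS : ∀ x y z : Ω, prec x y → prec y z → prec x z)
    (MONO : ∀ x ∈ E, ∀ y ∈ E, prec x y → S x ≤ S y)
    (N2 : ∀ X : Ω, ∃ X' ∈ E, ∃ X'' ∈ E, prec X' X ∧ prec X X'') :
    ∀ X Y : Ω, prec X Y →
      Sminus prec E S X ≤ Sminus prec E S Y ∧ Splus prec E S X ≤ Splus prec E S Y := by
  intro X Y hXY
  obtain ⟨X', hX'E, X'', hX''E, hX'X, hXX''⟩ := N2 X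
  obtain ⟨Y', hY'E, Y'', hY''E, hY'Y, hYY''⟩ := N2 Y
  have hsubL : lowerSet prec E S X ⊆ lowerSet prec E S Y := by
    rintro s ⟨Z, hZE, hZX, rfl⟩
    exact ⟨Z, hZE, TRANS _ _ _ hZX hXY, rfl⟩
  have hsubU : upperSet prec E S Y ⊆ upperSet prec E S X := by
    rintro s ⟨Z, hZE, hYZ, rfl⟩
    exact ⟨Z, hZE, TRANS _ _ _ hXY hYZ, rfl⟩
  have hneL : (lowerSet prec E S X).Nonempty := ⟨S X', X', hX'E, hX'X, rfl⟩
  have hneU : (upperSet prec E S Y).Nonempty := ⟨S Y'', Y'', hY''E, hYY'', rfl⟩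
  have hbddL : BddAbove (lowerSet prec E S Y) := by
    refine ⟨S Y'', ?_⟩
    rintro s ⟨Z, hZE, hZY, rfl⟩
    exact MONO _ hZE _ hY''E (TRANS _ _ _ hZY hYY'')
  have hbddU : BddBelow (upperSet prec E S X) := by
    refine ⟨S X', ?_⟩
    rintro s ⟨Z, hZE, hXZ, rfl⟩
    exact MONO _ hX'E _ hZE (TRANS _ _ _ hX'X hXZ)
  exact ⟨csSup_le_csSup hbddL hneL hsubL, csInf_le_csInf hbddU hneU hsubU⟩
end

section
/- For any X, Y ∈ Ω, if S₊(X) ≤ S₋(Y) then X ≺ Y. (Proposition 1 (e).) -/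
/-- Proposition 1 (e): S₊(X) ≤ S₋(Y) implies X ≺ Y. -/
theorem stmt_3 {Ω : Type*} (prec : Ω → Ω → Prop) (E : Set Ω) (S : Ω → ℝ)
    (TRANS : ∀ x y z : Ω, prec x y → prec y z → prec x z)
    (MONO : ∀ x ∈ E, ∀ y ∈ E, prec x y → S x ≤ S y)
    (N2 : ∀ X : Ω, ∃ X' ∈ E, ∃ X'' ∈ E, prec X' X ∧ prec X X'')
    (CHAR : ∀ x ∈ E, ∀ y ∈ E, (prec x y ↔ S x ≤ S y))
    (ATT : ∀ X : Ω, ∃ X' ∈ E, ∃ X'' ∈ E, prec X' X ∧ prec X X'' ∧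
      S X' = Sminus prec E S X ∧ S X'' = Splus prec E S X) :
    ∀ X Y : Ω, Splus prec E S X ≤ Sminus prec E S Y → prec X Y := by
  intro X Y h
  obtain ⟨_, _, X'', hX''E, _, hXX'', _, hX''⟩ := ATT X
  obtain ⟨Y', hY'E, _, _, hY'Y, _, hY', _⟩ := ATT Y
  exact TRANS _ _ _ hXX'' (TRANS _ _ _ ((CHAR _ hX''E _ hY'E).2 (by rw [hX'', hY']; exact h)) hY'Y)
end

section
/- Under composition, S₋ is superadditive and S₊ is subadditive: for all X₁ ∈ Ω₁ and X₂ ∈ Ω₂, S₋¹(X₁) + S₋²(X₂) ≤ S₋¹²(c(X₁,X₂)) ≤ S₊¹²(c(X₁,X₂)) ≤ S₊¹(X₁) + S₊²(X₂). (Proposition 1 (f).) -/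
/-- Proposition 1 (f): S₋ is superadditive and S₊ is subadditive
under composition of two systems. -/
theorem stmt_4 {Ω₁ Ω₂ Ω₁₂ : Type*}
    (prec₁ : Ω₁ → Ω₁ → Prop) (E₁ : Set Ω₁) (S₁ : Ω₁ → ℝ)
    (prec₂ : Ω₂ → Ω₂ → Prop) (E₂ : Set Ω₂) (S₂ : Ω₂ → ℝ)
    (prec₁₂ : Ω₁₂ → Ω₁₂ → Prop) (E₁₂ : Set Ω₁₂) (S₁₂ : Ω₁₂ → ℝ)
    (c : Ω₁ → Ω₂ → Ω₁₂)
    (TRANS1 : ∀ x y z : Ω₁, prec₁ x y → prec₁ y z → prec₁ x z)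
    (TRANS2 : ∀ x y z : Ω₂, prec₂ x y → prec₂ y z → prec₂ x z)
    (TRANS12 : ∀ x y z : Ω₁₂, prec₁₂ x y → prec₁₂ y z → prec₁₂ x z)
    (MONO1 : ∀ x ∈ E₁, ∀ y ∈ E₁, prec₁ x y → S₁ x ≤ S₁ y)
    (MONO2 : ∀ x ∈ E₂, ∀ y ∈ E₂, prec₂ x y → S₂ x ≤ S₂ y)
    (MONO12 : ∀ x ∈ E₁₂, ∀ y ∈ E₁₂, prec₁₂ x y → S₁₂ x ≤ S₁₂ y)
    (N2₁ : ∀ X : Ω₁, ∃ X' ∈ E₁, ∃ X'' ∈ E₁, prec₁ X' X ∧ prec₁ X X'')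
    (N2₂ : ∀ X : Ω₂, ∃ X' ∈ E₂, ∃ X'' ∈ E₂, prec₂ X' X ∧ prec₂ X X'')
    (N2₁₂ : ∀ X : Ω₁₂, ∃ X' ∈ E₁₂, ∃ X'' ∈ E₁₂, prec₁₂ X' X ∧ prec₁₂ X X'')
    (COMPEQ : ∀ Z₁ ∈ E₁, ∀ Z₂ ∈ E₂, c Z₁ Z₂ ∈ E₁₂)
    (CONSISTENCY : ∀ (X X' : Ω₁) (Y Y' : Ω₂),
      prec₁ X X' → prec₂ Y Y' → prec₁₂ (c X Y) (c X' Y'))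
    (ADDITIVITY : ∀ Z₁ ∈ E₁, ∀ Z₂ ∈ E₂, S₁₂ (c Z₁ Z₂) = S₁ Z₁ + S₂ Z₂)
    (ATT1 : ∀ X : Ω₁, ∃ X' ∈ E₁, ∃ X'' ∈ E₁, prec₁ X' X ∧ prec₁ X X'' ∧
      S₁ X' = Sminus prec₁ E₁ S₁ X ∧ S₁ X'' = Splus prec₁ E₁ S₁ X)
    (ATT2 : ∀ X : Ω₂, ∃ X' ∈ E₂, ∃ X'' ∈ E₂, prec₂ X' X ∧ prec₂ X X'' ∧
      S₂ X' = Sminus prec₂ E₂ S₂ X ∧ S₂ X'' = Splus prec₂ E₂ S₂ X) :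
    ∀ (X₁ : Ω₁) (X₂ : Ω₂),
      Sminus prec₁ E₁ S₁ X₁ + Sminus prec₂ E₂ S₂ X₂ ≤ Sminus prec₁₂ E₁₂ S₁₂ (c X₁ X₂) ∧
      Sminus prec₁₂ E₁₂ S₁₂ (c X₁ X₂) ≤ Splus prec₁₂ E₁₂ S₁₂ (c X₁ X₂) ∧
      Splus prec₁₂ E₁₂ S₁₂ (c X₁ X₂) ≤ Splus prec₁ E₁ S₁ X₁ + Splus prec₂ E₂ S₂ X₂ := by

  intro X₁ X₂
  obtain ⟨A', hA'E, A'', hA''E, hA'p, hA''p, hA'S, hA''S⟩ := ATT1 X₁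
  obtain ⟨B', hB'E, B'', hB''E, hB'p, hB''p, hB'S, hB''S⟩ := ATT2 X₂
  set X := c X₁ X₂
  have hlowmem : (S₁ A' + S₂ B') ∈ lowerSet prec₁₂ E₁₂ S₁₂ X :=
    ⟨c A' B', COMPEQ _ hA'E _ hB'E, CONSISTENCY _ _ _ _ hA'p hB'p,
      ADDITIVITY _ hA'E _ hB'E⟩
  have huppmem : (S₁ A'' + S₂ B'') ∈ upperSet prec₁₂ E₁₂ S₁₂ X :=
    ⟨c A'' B'', COMPEQ _ hA''E _ hB''E, CONSISTENCY _ _ _ _ hA''p hB''p,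
      ADDITIVITY _ hA''E _ hB''E⟩
  have hub : ∀ s ∈ lowerSet prec₁₂ E₁₂ S₁₂ X, s ≤ S₁ A'' + S₂ B'' := by
    rintro s ⟨Z, hZE, hZp, rfl⟩
    have := MONO12 Z hZE (c A'' B'') (COMPEQ _ hA''E _ hB''E)
      (TRANS12 _ _ _ hZp (CONSISTENCY _ _ _ _ hA''p hB''p))
    rw [ADDITIVITY _ hA''E _ hB''E] at this
    exact this
  have hlb : ∀ s ∈ upperSet prec₁₂ E₁₂ S₁₂ X, S₁ A' + S₂ B' ≤ s := by
    rintro s ⟨Z, hZE, hZp, rfl⟩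
    have := MONO12 (c A' B') (COMPEQ _ hA'E _ hB'E) Z hZE
      (TRANS12 _ _ _ (CONSISTENCY _ _ _ _ hA'p hB'p) hZp)
    rw [ADDITIVITY _ hA'E _ hB'E] at this
    exact this
  have hbddA : BddAbove (lowerSet prec₁₂ E₁₂ S₁₂ X) := ⟨_, hub⟩
  have hbddB : BddBelow (upperSet prec₁₂ E₁₂ S₁₂ X) := ⟨_, hlb⟩
  refine ⟨?_, ?_, ?_⟩
  · rw [← hA'S, ← hB'S]
    exact le_csSup hbddA hlowmem
  · apply csSup_le ⟨_, hlowmem⟩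
    rintro s ⟨Z, hZE, hZp, rfl⟩
    apply le_csInf ⟨_, huppmem⟩
    rintro t ⟨W, hWE, hWp, rfl⟩
    exact MONO12 Z hZE W hWE (TRANS12 _ _ _ hZp hWp)
  · rw [← hA''S, ← hB''S]
    exact csInf_le hbddB huppmem
end

section
/- If Ŝ : Ω → ℝ is any function that coincides with S on E and satisfies that X ≺ Y implies Ŝ(X) ≤ Ŝ(Y), then S₋(X) ≤ Ŝ(X) ≤ S₊(X) for every X ∈ Ω. (Proposition 1 (g).) -/
/-- Proposition 1 (g): any monotone extension Ŝ of S lies between S₋ and S₊. -/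
theorem stmt_5 {Ω : Type*} (prec : Ω → Ω → Prop) (E : Set Ω) (S : Ω → ℝ)
    (TRANS : ∀ x y z : Ω, prec x y → prec y z → prec x z)
    (MONO : ∀ x ∈ E, ∀ y ∈ E, prec x y → S x ≤ S y)
    (N2 : ∀ X : Ω, ∃ X' ∈ E, ∃ X'' ∈ E, prec X' X ∧ prec X X'')
    (ATT : ∀ X : Ω, ∃ X' ∈ E, ∃ X'' ∈ E, prec X' X ∧ prec X X'' ∧
      S X' = Sminus prec E S X ∧ S X'' = Splus prec E S X) :
    ∀ Shat : Ω → ℝ, (∀ Z ∈ E, Shat Z = S Z) →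
      (∀ X Y : Ω, prec X Y → Shat X ≤ Shat Y) →
      ∀ X : Ω, Sminus prec E S X ≤ Shat X ∧ Shat X ≤ Splus prec E S X := by
  intro Shat hext hmono X
  obtain ⟨X', hX'E, X'', hX''E, h1, h2, h3, h4⟩ := ATT X
  constructor
  · calc Sminus prec E S X = S X' := h3.symm
      _ = Shat X' := (hext X' hX'E).symm
      _ ≤ Shat X := hmono _ _ h1
  · calc Shat X ≤ Shat X'' := hmono _ _ h2
      _ = S X'' := hext X'' hX''E
      _ = Splus prec E S X := h4
end

section
/- There exists a unique function Ŝ : Ω → ℝ that coincides with S on E and is monotone with respect to ≺ (i.e. X ≺ Y implies Ŝ(X) ≤ Ŝ(Y)) if and only if S₋(X) = S₊(X) for all X ∈ Ω. (Theorem 4, equivalence of (i) and (ii).) -/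
/-- Theorem 4, (i) ⟺ (ii): a unique monotone extension of S exists
iff S₋ = S₊ everywhere. -/
theorem stmt_6 {Ω : Type*} (prec : Ω → Ω → Prop) (E : Set Ω) (S : Ω → ℝ)
    (TRANS : ∀ x y z : Ω, prec x y → prec y z → prec x z)
    (MONO : ∀ x ∈ E, ∀ y ∈ E, prec x y → S x ≤ S y)
    (N2 : ∀ X : Ω, ∃ X' ∈ E, ∃ X'' ∈ E, prec X' X ∧ prec X X'')
    (REFL : ∀ X : Ω, prec X X)
    (ATT : ∀ X : Ω, ∃ X' ∈ E, ∃ X'' ∈ E, prec X' X ∧ prec X X'' ∧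
      S X' = Sminus prec E S X ∧ S X'' = Splus prec E S X) :
    (∃! Shat : Ω → ℝ, (∀ Z ∈ E, Shat Z = S Z) ∧
        (∀ X Y : Ω, prec X Y → Shat X ≤ Shat Y)) ↔
      (∀ X : Ω, Sminus prec E S X = Splus prec E S X) := by
  have hbl : ∀ X, BddAbove (lowerSet prec E S X) := by
    intro X
    obtain ⟨X', hX', X'', hX'', h1, h2⟩ := N2 X
    refine ⟨S X'', ?_⟩
    rintro s ⟨Z, hZ, hZX, rfl⟩
    exact MONO Z hZ X'' hX'' (TRANS Z X X'' hZX h2)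
  have hbu : ∀ X, BddBelow (upperSet prec E S X) := by
    intro X
    obtain ⟨X', hX', X'', hX'', h1, h2⟩ := N2 X
    refine ⟨S X', ?_⟩
    rintro s ⟨Z, hZ, hXZ, rfl⟩
    exact MONO X' hX' Z hZ (TRANS X' X Z h1 hXZ)
  have hnl : ∀ X, (lowerSet prec E S X).Nonempty := by
    intro X
    obtain ⟨X', hX', X'', hX'', h1, h2⟩ := N2 X
    exact ⟨S X', X', hX', h1, rfl⟩
  have hnu : ∀ X, (upperSet prec E S X).Nonempty := by
    intro X
    obtain ⟨X', hX', X'', hX'', h1, h2⟩ := N2 X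
    exact ⟨S X'', X'', hX'', h2, rfl⟩
  have hSmE : ∀ Z ∈ E, Sminus prec E S Z = S Z := by
    intro Z hZ
    apply le_antisymm
    · apply csSup_le (hnl Z)
      rintro s ⟨W, hW, hWZ, rfl⟩
      exact MONO W hW Z hZ hWZ
    · exact le_csSup (hbl Z) ⟨Z, hZ, REFL Z, rfl⟩
  have hSpE : ∀ Z ∈ E, Splus prec E S Z = S Z := by
    intro Z hZ
    apply le_antisymm
    · exact csInf_le (hbu Z) ⟨Z, hZ, REFL Z, rfl⟩
    · apply le_csInf (hnu Z)
      rintro s ⟨W, hW, hZW, rfl⟩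
      exact MONO Z hZ W hW hZW
  have hSmMono : ∀ X Y, prec X Y → Sminus prec E S X ≤ Sminus prec E S Y := by
    intro X Y h
    apply csSup_le_csSup (hbl Y) (hnl X)
    rintro s ⟨Z, hZ, hZX, rfl⟩
    exact ⟨Z, hZ, TRANS Z X Y hZX h, rfl⟩
  have hSpMono : ∀ X Y, prec X Y → Splus prec E S X ≤ Splus prec E S Y := by
    intro X Y h
    apply csInf_le_csInf (hbu X) (hnu Y)
    rintro s ⟨Z, hZ, hYZ, rfl⟩
    exact ⟨Z, hZ, TRANS X Y Z h hYZ, rfl⟩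
  have hsandwich : ∀ (Shat : Ω → ℝ), (∀ Z ∈ E, Shat Z = S Z) →
      (∀ X Y, prec X Y → Shat X ≤ Shat Y) → ∀ X,
      Sminus prec E S X ≤ Shat X ∧ Shat X ≤ Splus prec E S X := by
    intro Shat hext hmono X
    constructor
    · apply csSup_le (hnl X)
      rintro s ⟨Z, hZ, hZX, rfl⟩
      calc S Z = Shat Z := (hext Z hZ).symm
        _ ≤ Shat X := hmono Z X hZX
    · apply le_csInf (hnu X)
      rintro s ⟨Z, hZ, hXZ, rfl⟩
      calc Shat X ≤ Shat Z := hmono X Z hXZ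
        _ = S Z := hext Z hZ
  constructor
  · rintro ⟨Shat, ⟨hext, hmono⟩, huniq⟩ X
    have h1 := huniq (Sminus prec E S) ⟨hSmE, hSmMono⟩
    have h2 := huniq (Splus prec E S) ⟨hSpE, hSpMono⟩
    rw [congrFun h1 X, congrFun h2 X]
  · intro h
    refine ⟨Sminus prec E S, ⟨hSmE, hSmMono⟩, ?_⟩
    rintro Shat ⟨hext, hmono⟩
    funext X
    have hs := hsandwich Shat hext hmono X
    have heq := h X
    linarith [hs.1, hs.2]
end

section
/- If S₋(X) = S₊(X) for all X ∈ Ω, then the common extension Ŝ := S₋ characterizes the relation: for all X, Y ∈ Ω, Ŝ(X) ≤ Ŝ(Y) implies X ≺ Y. (Theorem 4, implication (ii) ⟹ (iii).) -/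
/-- Theorem 4, (ii) ⟹ (iii): if S₋ = S₊ everywhere, then Ŝ := S₋
characterizes the relation: Ŝ(X) ≤ Ŝ(Y) implies X ≺ Y. -/
theorem stmt_7 {Ω : Type*} (prec : Ω → Ω → Prop) (E : Set Ω) (S : Ω → ℝ)
    (TRANS : ∀ x y z : Ω, prec x y → prec y z → prec x z)
    (MONO : ∀ x ∈ E, ∀ y ∈ E, prec x y → S x ≤ S y)
    (N2 : ∀ X : Ω, ∃ X' ∈ E, ∃ X'' ∈ E, prec X' X ∧ prec X X'')
    (CHAR : ∀ x ∈ E, ∀ y ∈ E, (prec x y ↔ S x ≤ S y))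
    (ATT : ∀ X : Ω, ∃ X' ∈ E, ∃ X'' ∈ E, prec X' X ∧ prec X X'' ∧
      S X' = Sminus prec E S X ∧ S X'' = Splus prec E S X)
    (hEq : ∀ X : Ω, Sminus prec E S X = Splus prec E S X) :
    ∀ X Y : Ω, Sminus prec E S X ≤ Sminus prec E S Y → prec X Y := by
  intro X Y h
  obtain ⟨_, _, X'', hX''E, _, hXX'', _, hSX''⟩ := ATT X
  obtain ⟨Y', hY'E, _, _, hY'Y, _, hSY', _⟩ := ATT Y
  have : S X'' ≤ S Y' := by rw [hSX'', hSY', ← hEq X]; exact h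
  exact TRANS _ _ _ (TRANS _ _ _ hXX'' ((CHAR _ hX''E _ hY'E).mpr this)) hY'Y
end

section
/- Suppose every X ∈ Ω is adiabatically comparable with every Z ∈ E (i.e. X ≺ Z or Z ≺ X). Then S₋(X) = S₊(X) for all X ∈ Ω. (Theorem 4, implication (v) ⟹ (ii).) -/
/-- Theorem 4, (v) ⟹ (ii): if every state is comparable with every
equilibrium state, then S₋ = S₊ everywhere. -/
theorem stmt_9 {Ω : Type*} (prec : Ω → Ω → Prop) (E : Set Ω) (S : Ω → ℝ)
    (TRANS : ∀ x y z : Ω, prec x y → prec y z → prec x z)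
    (MONO : ∀ x ∈ E, ∀ y ∈ E, prec x y → S x ≤ S y)
    (N2 : ∀ X : Ω, ∃ X' ∈ E, ∃ X'' ∈ E, prec X' X ∧ prec X X'')
    (CHAR : ∀ x ∈ E, ∀ y ∈ E, (prec x y ↔ S x ≤ S y))
    (ATT : ∀ X : Ω, ∃ X' ∈ E, ∃ X'' ∈ E, prec X' X ∧ prec X X'' ∧
      S X' = Sminus prec E S X ∧ S X'' = Splus prec E S X)
    (IVT : ∀ a ∈ S '' E, ∀ b ∈ S '' E, ∀ c : ℝ, a < c → c < b → c ∈ S '' E)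
    (hComp : ∀ X : Ω, ∀ Z ∈ E, prec X Z ∨ prec Z X) :
    ∀ X : Ω, Sminus prec E S X = Splus prec E S X := by
  intro X
  obtain ⟨X', hX'E, X'', hX''E, hX'X, hXX'', hS', hS''⟩ := ATT X
  have hBddA : BddAbove (lowerSet prec E S X) := by
    refine ⟨S X'', ?_⟩
    rintro s ⟨Z, hZE, hZX, rfl⟩
    exact MONO Z hZE X'' hX''E (TRANS Z X X'' hZX hXX'')
  have hBddB : BddBelow (upperSet prec E S X) := by
    refine ⟨S X', ?_⟩
    rintro s ⟨Z, hZE, hXZ, rfl⟩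
    exact MONO X' hX'E Z hZE (TRANS X' X Z hX'X hXZ)
  have hle : Sminus prec E S X ≤ Splus prec E S X := by
    rw [← hS', ← hS'']
    exact MONO X' hX'E X'' hX''E (TRANS X' X X'' hX'X hXX'')
  rcases lt_or_eq_of_le hle with hlt | heq
  · exfalso
    set c := (Sminus prec E S X + Splus prec E S X) / 2 with hc
    have h1 : Sminus prec E S X < c := by rw [hc]; linarith
    have h2 : c < Splus prec E S X := by rw [hc]; linarith
    obtain ⟨Z, hZE, hSZ⟩ := IVT (S X') ⟨X', hX'E, rfl⟩ (S X'') ⟨X'', hX''E, rfl⟩ c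
      (hS' ▸ h1) (hS'' ▸ h2)
    rcases hComp X Z hZE with hXZ | hZX
    · have : Splus prec E S X ≤ c := csInf_le hBddB ⟨Z, hZE, hXZ, hSZ⟩
      linarith
    · have : c ≤ Sminus prec E S X := le_csSup hBddA ⟨Z, hZE, hZX, hSZ⟩
      linarith
  · exact heq
end

section
/- If S₋(X) = S₊(X) for all X ∈ Ω, then every X ∈ Ω is adiabatically equivalent to some equilibrium state: there exists Z ∈ E with X ≺ Z and Z ≺ X. (Theorem 4, implication (ii) ⟹ (vi).) -/
/-- Theorem 4, (ii) ⟹ (vi): if S₋ = S₊ everywhere, then every state is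
adiabatically equivalent to some equilibrium state. -/
theorem stmt_10 {Ω : Type*} (prec : Ω → Ω → Prop) (E : Set Ω) (S : Ω → ℝ)
    (TRANS : ∀ x y z : Ω, prec x y → prec y z → prec x z)
    (MONO : ∀ x ∈ E, ∀ y ∈ E, prec x y → S x ≤ S y)
    (N2 : ∀ X : Ω, ∃ X' ∈ E, ∃ X'' ∈ E, prec X' X ∧ prec X X'')
    (CHAR : ∀ x ∈ E, ∀ y ∈ E, (prec x y ↔ S x ≤ S y))
    (ATT : ∀ X : Ω, ∃ X' ∈ E, ∃ X'' ∈ E, prec X' X ∧ prec X X'' ∧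
      S X' = Sminus prec E S X ∧ S X'' = Splus prec E S X)
    (hEq : ∀ X : Ω, Sminus prec E S X = Splus prec E S X) :
    ∀ X : Ω, ∃ Z ∈ E, prec X Z ∧ prec Z X := by
  intro X
  obtain ⟨X', hX'E, X'', hX''E, h1, h2, e1, e2⟩ := ATT X
  refine ⟨X'', hX''E, h2, TRANS _ _ _ ?_ h1⟩
  exact (CHAR _ hX''E _ hX'E).mpr (by rw [e1, e2, hEq])
end

section
/- In the toy model of two copper pieces, the lower entropy is given by S₋(T₁,T₂) = log(min(T₁,T₂)): for all T₁, T₂ > 0, sSup {log T : T > 0 and (T,T) ≺ (T₁,T₂)} = log(min(T₁,T₂)). (Formula for S₋ in Section 3.4.) -/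
/-- The adiabatic accessibility relation of the toy model of two copper pieces:
rubbing plus heat conduction toward the mean temperature. -/
def toyPrec (X Y : ℝ × ℝ) : Prop :=
  ∃ t ∈ Set.Icc (0 : ℝ) 1,
    Y.1 ≥ (1 - t) * X.1 + t * ((X.1 + X.2) / 2) ∧
    Y.2 ≥ (1 - t) * X.2 + t * ((X.1 + X.2) / 2)

lemma toyPrec_diag (T T₁ T₂ : ℝ) :
    toyPrec (T, T) (T₁, T₂) ↔ T ≤ T₁ ∧ T ≤ T₂ := by
  constructor
  · rintro ⟨t, _, h1, h2⟩
    have e : (1 - t) * T + t * ((T + T) / 2) = T := by ring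
    rw [e] at h1 h2
    exact ⟨h1, h2⟩
  · rintro ⟨h1, h2⟩
    refine ⟨0, by norm_num, ?_, ?_⟩ <;> simp <;> linarith

/-- S₋(T₁,T₂) = log(min(T₁,T₂)) in the toy model. -/
theorem stmt_17 :
    ∀ T₁ T₂ : ℝ, 0 < T₁ → 0 < T₂ →
      sSup {s : ℝ | ∃ T : ℝ, 0 < T ∧ toyPrec (T, T) (T₁, T₂) ∧ s = Real.log T}
        = Real.log (min T₁ T₂) := by
  intro T₁ T₂ h₁ h₂
  have hm : 0 < min T₁ T₂ := lt_min h₁ h₂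
  have hset : {s : ℝ | ∃ T : ℝ, 0 < T ∧ toyPrec (T, T) (T₁, T₂) ∧ s = Real.log T}
      = Set.Iic (Real.log (min T₁ T₂)) := by
    ext s
    simp only [Set.mem_setOf_eq, Set.mem_Iic, toyPrec_diag]
    constructor
    · rintro ⟨T, hT, ⟨hle1, hle2⟩, rfl⟩
      exact Real.log_le_log hT (le_min hle1 hle2)
    · intro hs
      refine ⟨Real.exp s, Real.exp_pos s, ⟨?_, ?_⟩, (Real.log_exp s).symm⟩ <;>
      · have := Real.exp_le_exp.mpr hs
        rw [Real.exp_log hm] at this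
        simp [le_min_iff] at this ⊢
        linarith [this.1, this.2]
  rw [hset, csSup_Iic]
end

section
/- In the toy model of two copper pieces, the upper entropy is given by S₊(T₁,T₂) = log((T₁+T₂)/2): for all T₁, T₂ > 0, sInf {log T : T > 0 and (T₁,T₂) ≺ (T,T)} = log((T₁+T₂)/2). (Formula for S₊ in Section 3.4.) -/
/-- S₊(T₁,T₂) = log((T₁+T₂)/2) in the toy model. -/
theorem stmt_18 :
    ∀ T₁ T₂ : ℝ, 0 < T₁ → 0 < T₂ →
      sInf {s : ℝ | ∃ T : ℝ, 0 < T ∧ toyPrec (T₁, T₂) (T, T) ∧ s = Real.log T}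
        = Real.log ((T₁ + T₂) / 2) := by
  intro T₁ T₂ h₁ h₂
  set m : ℝ := (T₁ + T₂) / 2 with hm
  have hmpos : 0 < m := by positivity
  -- lower bound: every element of the set is ≥ log m
  have hlb : ∀ s ∈ {s : ℝ | ∃ T : ℝ, 0 < T ∧ toyPrec (T₁, T₂) (T, T) ∧ s = Real.log T},
      Real.log m ≤ s := by
    rintro s ⟨T, hT, ⟨t, ⟨ht0, ht1⟩, hc1, hc2⟩, rfl⟩
    have hTm : m ≤ T := by
      simp only at hc1 hc2
      nlinarith
    exact Real.log_le_log hmpos hTm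
  -- membership: m itself is in the set
  have hmem : Real.log m ∈ {s : ℝ | ∃ T : ℝ, 0 < T ∧ toyPrec (T₁, T₂) (T, T) ∧ s = Real.log T} := by
    refine ⟨m, hmpos, ⟨1, ⟨zero_le_one, le_refl 1⟩, ?_, ?_⟩, rfl⟩ <;> simp only [hm] <;> nlinarith
  apply le_antisymm
  · exact csInf_le ⟨Real.log m, hlb⟩ hmem
  · exact le_csInf ⟨Real.log m, hmem⟩ hlb
end
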